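/- For every ρ ∈ (0,1], one has 2·√(1−ρ²)·artanh(√(1−ρ²)) ≥ max(−2·log ρ, 4·(1−ρ)). In particular, the inequality 2·√(1−ρ²)·artanh(√(1−ρ²)) ≤ h simultaneously strengthens Avez's inequality −2·log ρ ≤ h and Ledrappier's inequality 4·(1−ρ) ≤ h. -/

import Mathlib

/-- Inverse hyperbolic tangent. -/
noncomputable def artanh (x : ℝ) : ℝ := (1 / 2) * Real.log ((1 + x) / (1 - x))

lemma aux_exp (t : ℝ) (ht : 0 ≤ t) : (1 - t) * Real.exp (2 * t) ≤ 1 + t := by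
  set f : ℝ → ℝ := fun x => 1 + x - (1 - x) * Real.exp (2 * x) with hf
  have hd : ∀ x : ℝ, HasDerivAt f (1 - (1 - 2 * x) * Real.exp (2 * x)) x := by
    intro x
    have h2 : HasDerivAt (fun x : ℝ => 2 * x) 2 x := by
      simpa using (hasDerivAt_id x).const_mul 2
    have he := h2.exp
    have hg : HasDerivAt (fun x : ℝ => 1 - x) (-1) x := by
      simpa using (hasDerivAt_id x).const_sub 1
    have hx : HasDerivAt (fun x : ℝ => 1 + x) 1 x := by
      simpa using (hasDerivAt_id x).const_add 1
    have := hx.sub (hg.mul he)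
    refine this.congr_deriv ?_
    ring
  have hderiv_nonneg : ∀ x : ℝ, 0 ≤ x → 0 ≤ 1 - (1 - 2 * x) * Real.exp (2 * x) := by
    intro x hx
    have h1 := Real.add_one_le_exp (-(2 * x))
    have h2 : Real.exp (-(2 * x)) * Real.exp (2 * x) = 1 := by
      rw [← Real.exp_add]; simp
    nlinarith [Real.exp_pos (2 * x), Real.exp_pos (-(2 * x))]
  have hmono : MonotoneOn f (Set.Ici (0 : ℝ)) := by
    apply monotoneOn_of_deriv_nonneg (convex_Ici 0)
    · exact fun x _ => (hd x).continuousAt.continuousWithinAt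
    · intro x hx
      exact (hd x).differentiableAt.differentiableWithinAt
    · intro x hx
      rw [(hd x).deriv]
      exact hderiv_nonneg x (le_of_lt (by simpa using hx))
  have h0 : f 0 ≤ f t := hmono (Set.self_mem_Ici) (Set.mem_Ici.mpr ht) ht
  have hf0 : f 0 = 0 := by simp [hf]
  have : (0 : ℝ) ≤ f t := hf0 ▸ h0
  simp only [hf] at this
  linarith

lemma aux_log (t : ℝ) (ht : 0 ≤ t) (ht1 : t < 1) :
    2 * t ≤ Real.log ((1 + t) / (1 - t)) := by
  have h1t : (0 : ℝ) < 1 - t := by linarith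
  have h := aux_exp t ht
  have hle : Real.exp (2 * t) ≤ (1 + t) / (1 - t) := by
    rw [le_div_iff₀ h1t]; nlinarith
  have := Real.log_le_log (Real.exp_pos _) hle
  rwa [Real.log_exp] at this

theorem max_avez_ledrappier_le (ρ : ℝ) (hρ : ρ ∈ Set.Ioc (0 : ℝ) 1) :
    max (-2 * Real.log ρ) (4 * (1 - ρ)) ≤
      2 * Real.sqrt (1 - ρ ^ 2) * artanh (Real.sqrt (1 - ρ ^ 2)) := by
  obtain ⟨hρ0, hρ1⟩ := hρ
  set s := Real.sqrt (1 - ρ ^ 2) with hsdef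
  have hs0 : 0 ≤ s := Real.sqrt_nonneg _
  have hs2 : s ^ 2 = 1 - ρ ^ 2 := Real.sq_sqrt (by nlinarith)
  have hs1 : s < 1 := by nlinarith
  have h1ms : (0 : ℝ) < 1 - s := by linarith
  have h1ps : (0 : ℝ) < 1 + s := by linarith
  have hprod : (1 - s) * (1 + s) = ρ ^ 2 := by nlinarith
  have hA : s ≤ (1 + s) * Real.log (1 + s) := by
    have h := Real.log_le_sub_one_of_pos (show (0 : ℝ) < 1 / (1 + s) by positivity)
    rw [one_div, Real.log_inv] at h
    have hinv : (1 + s)⁻¹ * (1 + s) = 1 := inv_mul_cancel₀ (ne_of_gt h1ps)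
    nlinarith
  have hB : -s ≤ (1 - s) * Real.log (1 - s) := by
    have h := Real.log_le_sub_one_of_pos (show (0 : ℝ) < 1 / (1 - s) by positivity)
    rw [one_div, Real.log_inv] at h
    have hinv : (1 - s)⁻¹ * (1 - s) = 1 := inv_mul_cancel₀ (ne_of_gt h1ms)
    nlinarith
  have hlog_div : Real.log ((1 + s) / (1 - s)) = Real.log (1 + s) - Real.log (1 - s) :=
    Real.log_div (ne_of_gt h1ps) (ne_of_gt h1ms)
  have hartanh : artanh s = (1 / 2) * (Real.log (1 + s) - Real.log (1 - s)) := by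
    rw [artanh, hlog_div]
  -- Part (a): Avez
  have havez : -2 * Real.log ρ ≤ 2 * s * artanh s := by
    have hlogρ : 2 * Real.log ρ = Real.log (1 + s) + Real.log (1 - s) := by
      have : Real.log (ρ ^ 2) = 2 * Real.log ρ := by
        rw [Real.log_pow]; push_cast; ring
      rw [← this, ← hprod, Real.log_mul (ne_of_gt h1ms) (ne_of_gt h1ps)]
      ring
    rw [hartanh]
    nlinarith
  -- Part (b): Ledrappier
  have hled : 4 * (1 - ρ) ≤ 2 * s * artanh s := by
    set t := (1 + s - ρ) / (1 + s + ρ) with htdef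
    have hden : (0 : ℝ) < 1 + s + ρ := by linarith
    have ht0 : 0 ≤ t := div_nonneg (by linarith) (le_of_lt hden)
    have ht1 : t < 1 := by
      rw [div_lt_one hden]; linarith
    have hkey := aux_log t ht0 ht1
    have h1pt : 1 + t = 2 * (1 + s) / (1 + s + ρ) := by
      rw [htdef]; field_simp; ring
    have h1mt : 1 - t = 2 * ρ / (1 + s + ρ) := by
      rw [htdef]; field_simp; ring
    have hratio : (1 + t) / (1 - t) = (1 + s) / ρ := by
      rw [h1pt, h1mt]
      field_simp
    rw [hratio] at hkey
    -- artanh s = log ((1+s)/ρ)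
    have hsq : (1 + s) / (1 - s) = ((1 + s) / ρ) ^ 2 := by
      rw [div_pow, ← hprod]
      field_simp
    have hart2 : artanh s = Real.log ((1 + s) / ρ) := by
      rw [artanh, hsq, Real.log_pow]
      push_cast; ring
    rw [hart2]
    have hst : s * (1 + s - ρ) = (1 - ρ) * (1 + s + ρ) := by nlinarith
    have h4 : 4 * (1 - ρ) ≤ 2 * s * (2 * t) := by
      have heq : 2 * s * (2 * t) = 4 * (1 - ρ) := by
        rw [htdef]
        field_simp
        linear_combination 4 * hst
      linarith [heq.ge]
    have : 2 * s * (2 * t) ≤ 2 * s * Real.log ((1 + s) / ρ) := by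
      apply mul_le_mul_of_nonneg_left hkey (by linarith)
    linarith
  exact max_le havez hled
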